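/- Let V ↪ H ↪ V* be a Gelfand triple of Hilbert spaces and let u ∈ H¹(t_{j−1}, t_j; V) with ü ∈ L²(t_{j−1}, t_j; V*). Then the piecewise linear interpolant ℓ(t) = u(t_{j−1}) + (u(t_j) − u(t_{j−1}))(t − t_{j−1})/τ satisfies, for all t ∈ [t_{j−1}, t_j], ‖ℓ(t) − u(t)‖_H² ≤ (τ²/√768) ∫_{t_{j−1}}^{t_j} (‖ü(s)‖_{V*}² + ‖u̇(s)‖_V²) ds, where τ = t_j − t_{j−1}. -/

import Mathlib

set_option maxHeartbeats 1000000

open MeasureTheory intervalIntegral Set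
open scoped RealInnerProductSpace

open scoped RealInnerProductSpace

lemma my_cs_integral {p q : ℝ} (hpq : p ≤ q) {g h : ℝ → ℝ}
    (hg2 : IntervalIntegrable (fun s => g s ^ 2) volume p q)
    (hh2 : IntervalIntegrable (fun s => h s ^ 2) volume p q)
    (hgh : IntervalIntegrable (fun s => g s * h s) volume p q) :
    (∫ s in p..q, g s * h s) ^ 2 ≤ (∫ s in p..q, g s ^ 2) * (∫ s in p..q, h s ^ 2) := by
  have key : ∀ x : ℝ, 0 ≤ (∫ s in p..q, h s ^ 2) * (x * x)
      + (-(2 * ∫ s in p..q, g s * h s)) * x + (∫ s in p..q, g s ^ 2) := by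
    intro x
    have h0 : 0 ≤ ∫ s in p..q, (g s - x * h s) ^ 2 :=
      intervalIntegral.integral_nonneg hpq (fun s _ => sq_nonneg _)
    have hexp : (fun s => (g s - x * h s) ^ 2)
        = fun s => g s ^ 2 - (2 * x) * (g s * h s) + x ^ 2 * h s ^ 2 := by
      funext s; ring
    rw [hexp] at h0
    rw [intervalIntegral.integral_add ((hg2.sub (hgh.const_mul _))) (hh2.const_mul _),
        intervalIntegral.integral_sub hg2 (hgh.const_mul _),
        intervalIntegral.integral_const_mul, intervalIntegral.integral_const_mul] at h0
    nlinarith [h0]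
  have := discrim_le_zero key
  unfold discrim at this
  nlinarith [this]

lemma my_amgm (a b : ℝ) : a * b ≤ (a + b) ^ 2 / 4 := by nlinarith [sq_nonneg (a - b)]

lemma my_le_of_sq_le_sq (x y : ℝ) (h : x ^ 2 ≤ y ^ 2) (hx : 0 ≤ x) (hy : 0 ≤ y) : x ≤ y := by
  nlinarith [h, hx, hy]

lemma my_cs_two (p q x y : ℝ) : (p * x + q * y) ^ 2 ≤ (p ^ 2 + q ^ 2) * (x ^ 2 + y ^ 2) := by
  nlinarith [sq_nonneg (p * y - q * x)]

/-- Piecewise linear interpolation error in a Gelfand triple `V ↪ H ↪ V*`: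
`‖ℓ(t) − u(t)‖_H² ≤ (τ²/√768) ∫ (‖ü‖_{V*}² + ‖u̇‖_V²)`, where
`ℓ(t) = u(t₁) + (u(t₂) − u(t₁))(t − t₁)/τ`, `τ = t₂ − t₁`. The embedding is `ι`,
`u̇` is the derivative of `u` in `V` (hence in `H`), and the second derivative `ü`
is taken weakly, as a functional on `V` via the pairing `⟪ι(u̇(·)), ι v⟫`. -/
theorem piecewise_linear_interpolation_error
    {V H : Type*} [NormedAddCommGroup V] [InnerProductSpace ℝ V] [CompleteSpace V]
    [NormedAddCommGroup H] [InnerProductSpace ℝ H] [CompleteSpace H]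
    (ι : V →L[ℝ] H) (hinj : Function.Injective ι) (hdense : DenseRange ι)
    (t₁ t₂ : ℝ) (hlt : t₁ < t₂)
    (u udot : ℝ → V) (uddot : ℝ → (V →L[ℝ] ℝ))
    (hu : ∀ t ∈ Set.Icc t₁ t₂, HasDerivAt u (udot t) t)
    (huddot : ∀ v : V, ∀ t ∈ Set.Icc t₁ t₂,
      HasDerivAt (fun s => ⟪ι (udot s), ι v⟫) (uddot t v) t)
    (hint : IntervalIntegrable (fun s => ‖uddot s‖ ^ 2 + ‖udot s‖ ^ 2)
      MeasureTheory.volume t₁ t₂)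
    (t : ℝ) (ht : t ∈ Set.Icc t₁ t₂) :
    ‖ι (u t₁ + ((t - t₁) / (t₂ - t₁)) • (u t₂ - u t₁)) - ι (u t)‖ ^ 2
      ≤ (t₂ - t₁) ^ 2 / Real.sqrt 768 *
          ∫ s in t₁..t₂, (‖uddot s‖ ^ 2 + ‖udot s‖ ^ 2) := by
  have hle : t₁ ≤ t₂ := hlt.le
  set τ : ℝ := t₂ - t₁ with hτdef
  have hτ : 0 < τ := by simp only [hτdef]; linarith
  have hτ0 : τ ≠ 0 := hτ.ne'
  set d : V := u t₂ - u t₁ with hddef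
  set c : V := τ⁻¹ • d with hcdef
  -- measurability (from part 1, abbreviated)
  have hne2 : ∀ᵐ s ∂(volume : Measure ℝ), s ≠ t₂ := by
    have : (volume : Measure ℝ) {t₂} = 0 := Real.volume_singleton
    rw [measure_eq_zero_iff_ae_notMem] at this
    simpa using this
  have hudot_m : AEStronglyMeasurable udot (volume.restrict (Set.Ioc t₁ t₂)) := by
    refine ((stronglyMeasurable_deriv u).aestronglyMeasurable).congr (Filter.EventuallyEq.symm ?_)
    filter_upwards [ae_restrict_of_ae hne2, ae_restrict_mem measurableSet_Ioc]
      with s hs hmem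
    exact ((hu s ⟨hmem.1.le, hmem.2⟩).deriv).symm
  have huddot_m : ∀ v : V, AEStronglyMeasurable (fun s => uddot s v)
      (volume.restrict (Set.Ioc t₁ t₂)) := by
    intro v
    refine ((stronglyMeasurable_deriv (fun s => ⟪ι (udot s), ι v⟫)).aestronglyMeasurable).congr
      (Filter.EventuallyEq.symm ?_)
    filter_upwards [ae_restrict_of_ae hne2, ae_restrict_mem measurableSet_Ioc]
      with s hs hmem
    exact ((huddot v s ⟨hmem.1.le, hmem.2⟩).deriv).symm
  -- integrability on Ioc t₁ t₂
  have hSi : IntegrableOn (fun s => ‖uddot s‖ ^ 2 + ‖udot s‖ ^ 2) (Set.Ioc t₁ t₂) volume :=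
    (intervalIntegrable_iff_integrableOn_Ioc_of_le hle).mp hint
  have hSnn : ∀ s, (0:ℝ) ≤ ‖uddot s‖ ^ 2 + ‖udot s‖ ^ 2 := fun s => by positivity
  have hB_m : AEStronglyMeasurable (fun s => ‖udot s‖ ^ 2) (volume.restrict (Set.Ioc t₁ t₂)) := by
    simpa [pow_two] using (show AEStronglyMeasurable (fun s => ‖udot s‖ * ‖udot s‖) (volume.restrict (Set.Ioc t₁ t₂)) from hudot_m.norm.mul hudot_m.norm)
  have hBi : IntegrableOn (fun s => ‖udot s‖ ^ 2) (Set.Ioc t₁ t₂) volume := by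
    refine hSi.mono' hB_m (ae_of_all _ fun s => ?_)
    rw [Real.norm_eq_abs, abs_of_nonneg (by positivity : (0:ℝ) ≤ ‖udot s‖ ^ 2)]
    nlinarith [sq_nonneg ‖uddot s‖]
  have hconsti : ∀ k : ℝ, IntegrableOn (fun _ : ℝ => k) (Set.Ioc t₁ t₂) volume := fun k =>
    (integrableOn_const_iff (C := k)).mpr (Or.inr measure_Ioc_lt_top)
  have hconstVi : ∀ k : V, IntegrableOn (fun _ : ℝ => k) (Set.Ioc t₁ t₂) volume := fun k =>
    (integrableOn_const_iff (C := k)).mpr (Or.inr measure_Ioc_lt_top)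
  have honeS : IntegrableOn (fun s => 1 + (‖uddot s‖ ^ 2 + ‖udot s‖ ^ 2)) (Set.Ioc t₁ t₂) volume :=
    (hconsti 1).add hSi
  have hudoti : IntegrableOn udot (Set.Ioc t₁ t₂) volume := by
    refine honeS.mono' hudot_m (ae_of_all _ fun s => ?_)
    nlinarith [sq_nonneg (‖udot s‖ - 1), sq_nonneg ‖uddot s‖, norm_nonneg (udot s)]
  have hinneri : IntegrableOn (fun s => ⟪c, udot s⟫) (Set.Ioc t₁ t₂) volume := by
    refine (hudoti.norm.const_mul ‖c‖).mono' (aestronglyMeasurable_const.inner hudot_m)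
      (ae_of_all _ fun s => abs_real_inner_le_norm _ _)
  have hedoti : IntegrableOn (fun s => c - udot s) (Set.Ioc t₁ t₂) volume :=
    (hconstVi c).sub hudoti
  have hedot_m : AEStronglyMeasurable (fun s => c - udot s) (volume.restrict (Set.Ioc t₁ t₂)) :=
    hedoti.aestronglyMeasurable
  have hedotsqi : IntegrableOn (fun s => ‖c - udot s‖ ^ 2) (Set.Ioc t₁ t₂) volume := by
    refine (((hconsti (2 * ‖c‖ ^ 2)).add (hBi.const_mul 2)).mono'
      (by simpa [pow_two] using (show AEStronglyMeasurable (fun s => ‖c - udot s‖ * ‖c - udot s‖) (volume.restrict (Set.Ioc t₁ t₂)) from hedot_m.norm.mul hedot_m.norm)) (ae_of_all _ fun s => ?_))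
    simp only [Pi.add_apply]
    rw [Real.norm_eq_abs, abs_of_nonneg (by positivity : (0:ℝ) ≤ ‖c - udot s‖ ^ 2)]
    nlinarith [mul_self_le_mul_self (norm_nonneg (c - udot s)) (norm_sub_le c (udot s)),
      norm_nonneg c, norm_nonneg (udot s), sq_nonneg (‖c‖ - ‖udot s‖)]
  -- interval versions
  have ivS : IntervalIntegrable (fun s => ‖uddot s‖ ^ 2 + ‖udot s‖ ^ 2) volume t₁ t₂ := hint
  have ivB : IntervalIntegrable (fun s => ‖udot s‖ ^ 2) volume t₁ t₂ :=
    (intervalIntegrable_iff_integrableOn_Ioc_of_le hle).mpr hBi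
  have ivudot : IntervalIntegrable udot volume t₁ t₂ :=
    (intervalIntegrable_iff_integrableOn_Ioc_of_le hle).mpr hudoti
  have ivinner : IntervalIntegrable (fun s => ⟪c, udot s⟫) volume t₁ t₂ :=
    (intervalIntegrable_iff_integrableOn_Ioc_of_le hle).mpr hinneri
  have ivedot : IntervalIntegrable (fun s => c - udot s) volume t₁ t₂ :=
    (intervalIntegrable_iff_integrableOn_Ioc_of_le hle).mpr hedoti
  have ivedotsq : IntervalIntegrable (fun s => ‖c - udot s‖ ^ 2) volume t₁ t₂ :=
    (intervalIntegrable_iff_integrableOn_Ioc_of_le hle).mpr hedotsqi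
  -- uddot applied to a vector
  have hgvsqi : ∀ v : V, IntegrableOn (fun s => (uddot s v) ^ 2) (Set.Ioc t₁ t₂) volume := by
    intro v
    refine (hSi.const_mul (‖v‖ ^ 2)).mono'
      (by simpa [pow_two] using (show AEStronglyMeasurable (fun s => uddot s v * uddot s v) (volume.restrict (Set.Ioc t₁ t₂)) from (huddot_m v).mul (huddot_m v))) (ae_of_all _ fun s => ?_)
    rw [Real.norm_eq_abs, abs_of_nonneg (sq_nonneg _)]
    have h1 : |uddot s v| ≤ ‖uddot s‖ * ‖v‖ := (uddot s).le_opNorm v |>.trans_eq' (by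
      rw [Real.norm_eq_abs])
    nlinarith [mul_self_le_mul_self (abs_nonneg (uddot s v)) h1, sq_abs (uddot s v),
      sq_nonneg ‖udot s‖, mul_nonneg (norm_nonneg (uddot s)) (norm_nonneg v),
      sq_nonneg (‖uddot s‖ * ‖v‖)]
  have hgvi : ∀ v : V, IntegrableOn (fun s => uddot s v) (Set.Ioc t₁ t₂) volume := by
    intro v
    refine ((hconsti 1).add (hgvsqi v)).mono' (huddot_m v) (ae_of_all _ fun s => ?_)
    simp only [Pi.add_apply]
    rw [Real.norm_eq_abs]
    nlinarith [sq_nonneg (|uddot s v| - 1), abs_nonneg (uddot s v), sq_abs (uddot s v)]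
  have ivgv : ∀ v : V, IntervalIntegrable (fun s => uddot s v) volume t₁ t₂ := fun v =>
    (intervalIntegrable_iff_integrableOn_Ioc_of_le hle).mpr (hgvi v)
  have ivgvsq : ∀ v : V, IntervalIntegrable (fun s => (uddot s v) ^ 2) volume t₁ t₂ := fun v =>
    (intervalIntegrable_iff_integrableOn_Ioc_of_le hle).mpr (hgvsqi v)
  -- weighted products
  have ivwgv : ∀ v : V, ∀ w : ℝ → ℝ, Continuous w → (∀ s ∈ Set.Ioc t₁ t₂, |w s| ≤ τ) →
      IntervalIntegrable (fun s => w s * uddot s v) volume t₁ t₂ := by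
    intro v w hw hwb
    refine (intervalIntegrable_iff_integrableOn_Ioc_of_le hle).mpr ?_
    refine ((hgvi v).norm.const_mul τ).mono'
      (hw.aestronglyMeasurable.restrict.mul (huddot_m v)) ?_
    filter_upwards [ae_restrict_mem measurableSet_Ioc] with s hs
    rw [Real.norm_eq_abs, abs_mul]
    have := hwb s hs
    have : |w s| * |uddot s v| ≤ τ * |uddot s v| :=
      mul_le_mul_of_nonneg_right this (abs_nonneg _)
    simpa [Real.norm_eq_abs] using this
  have ht1 : t₁ ≤ t := ht.1
  have ht2 : t ≤ t₂ := ht.2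
  have hsub1 : Set.uIcc t₁ t ⊆ Set.uIcc t₁ t₂ := by
    rw [uIcc_of_le ht1, uIcc_of_le hle]; exact Icc_subset_Icc le_rfl ht2
  have hsub2 : Set.uIcc t t₂ ⊆ Set.uIcc t₁ t₂ := by
    rw [uIcc_of_le ht2, uIcc_of_le hle]; exact Icc_subset_Icc ht1 le_rfl
  -- the error function and its derivative
  set e : ℝ → V := fun s => u t₁ + ((s - t₁) / τ) • d - u s with hedef
  set edot : ℝ → V := fun s => c - udot s with hedotdef
  have he : ∀ s ∈ Set.Icc t₁ t₂, HasDerivAt e (edot s) s := by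
    intro s hs
    have hlin : HasDerivAt (fun y : ℝ => ((y - t₁) / τ) • d) (τ⁻¹ • d) s := by
      have := (((hasDerivAt_id s).sub_const t₁).div_const τ).smul_const d
      simpa [one_div] using this
    exact (hlin.const_add (u t₁)).sub (hu s hs)
  have het₁ : e t₁ = 0 := by simp [hedef]
  have het₂ : e t₂ = 0 := by
    simp only [hedef]
    rw [div_self hτ0, one_smul, hddef]
    abel
  set v : V := e t with hvdef
  -- FTC for u
  have hFTCu : ∫ s in t₁..t₂, udot s = d := by
    rw [intervalIntegral.integral_eq_sub_of_hasDerivAt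
      (fun s hs => hu s (by rwa [uIcc_of_le hle] at hs)) ivudot]
  have hτc : τ • c = d := by rw [hcdef]; exact smul_inv_smul₀ hτ0 d
  -- FTC for e on subintervals
  have hEt1 : ∫ s in t₁..t, edot s = v := by
    rw [intervalIntegral.integral_eq_sub_of_hasDerivAt
      (fun s hs => he s (by rw [uIcc_of_le ht1] at hs; exact ⟨hs.1, hs.2.trans ht2⟩))
      (ivedot.mono_set hsub1), het₁, sub_zero, hvdef]
  have hEt2 : ∫ s in t..t₂, edot s = -v := by
    rw [intervalIntegral.integral_eq_sub_of_hasDerivAt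
      (fun s hs => he s (by rw [uIcc_of_le ht2] at hs; exact ⟨ht1.trans hs.1, hs.2⟩))
      (ivedot.mono_set hsub2), het₂, zero_sub, hvdef]
  -- the scalar functions F and G
  set F : ℝ → ℝ := fun s => ⟪ι v, ι (e s)⟫ with hFdef
  set G : ℝ → ℝ := fun s => ⟪ι v, ι c⟫ - ⟪ι (udot s), ι v⟫ with hGdef
  have hFder : ∀ s ∈ Set.Icc t₁ t₂, HasDerivAt F (G s) s := by
    intro s hs
    have hM := (((innerSL ℝ (ι v)).comp ι).hasFDerivAt).comp_hasDerivAt s (he s hs)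
    have h1 : (⇑((innerSL ℝ (ι v)).comp ι) ∘ e) = F := by
      funext y; simp [hFdef, Function.comp]
    have h2 : ((innerSL ℝ (ι v)).comp ι) (edot s) = G s := by
      simp only [hGdef, hedotdef, ContinuousLinearMap.comp_apply, innerSL_apply_apply, map_sub,
        inner_sub_right]
      rw [real_inner_comm (ι (udot s)) (ι v)]
    rw [h1, h2] at hM
    exact hM
  have hGder : ∀ s ∈ Set.Icc t₁ t₂, HasDerivAt G (-(uddot s v)) s := fun s hs =>
    (huddot v s hs).const_sub _
  have hGcont : ContinuousOn G (Set.Icc t₁ t₂) := fun s hs =>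
    ((hGder s hs).continuousAt).continuousWithinAt
  have ivG1 : IntervalIntegrable G volume t₁ t := by
    apply ContinuousOn.intervalIntegrable
    rw [uIcc_of_le ht1]
    exact hGcont.mono (Icc_subset_Icc le_rfl ht2)
  have ivG2 : IntervalIntegrable G volume t t₂ := by
    apply ContinuousOn.intervalIntegrable
    rw [uIcc_of_le ht2]
    exact hGcont.mono (Icc_subset_Icc ht1 le_rfl)
  -- F values at endpoints, and ∫ G
  have hFt1 : F t₁ = 0 := by simp [hFdef, het₁]
  have hFt2 : F t₂ = 0 := by simp [hFdef, het₂]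
  have hG1 : ∫ s in t₁..t, G s = F t := by
    rw [intervalIntegral.integral_eq_sub_of_hasDerivAt
      (fun s hs => hFder s (by rw [uIcc_of_le ht1] at hs; exact ⟨hs.1, hs.2.trans ht2⟩)) ivG1,
      hFt1, sub_zero]
  have hG2 : ∫ s in t..t₂, G s = -F t := by
    rw [intervalIntegral.integral_eq_sub_of_hasDerivAt
      (fun s hs => hFder s (by rw [uIcc_of_le ht2] at hs; exact ⟨ht1.trans hs.1, hs.2⟩)) ivG2,
      hFt2, zero_sub]
  -- weighted integrals of uddot · v
  set a : ℝ := t - t₁ with hadef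
  set b : ℝ := t₂ - t with hbdef
  have ha0 : 0 ≤ a := by simp only [hadef, sub_nonneg]; exact ht1
  have hb0 : 0 ≤ b := by simp only [hbdef, sub_nonneg]; exact ht2
  have habτ : a + b = τ := by simp only [hadef, hbdef, hτdef]; ring
  have ivw1 : IntervalIntegrable (fun s => (s - t₁) * uddot s v) volume t₁ t₂ := by
    refine ivwgv v (fun s => s - t₁) (continuous_id.sub continuous_const) (fun s hs => ?_)
    rw [abs_of_nonneg (by linarith [hs.1.le] : (0:ℝ) ≤ s - t₁)]
    simp only [hτdef]; linarith [hs.2]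
  have ivw2 : IntervalIntegrable (fun s => (t₂ - s) * uddot s v) volume t₁ t₂ := by
    refine ivwgv v (fun s => t₂ - s) (continuous_const.sub continuous_id) (fun s hs => ?_)
    rw [abs_of_nonneg (by linarith [hs.2] : (0:ℝ) ≤ t₂ - s)]
    simp only [hτdef]; linarith [hs.1.le]
  set I₁ : ℝ := ∫ s in t₁..t, (s - t₁) * uddot s v with hI₁def
  set I₂ : ℝ := ∫ s in t..t₂, (t₂ - s) * uddot s v with hI₂def
  -- integration by parts identities
  have hI₁ : I₁ = F t - a * G t := by
    have hP : ∀ s ∈ Set.uIcc t₁ t,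
        HasDerivAt (fun y => (y - t₁) * G y) (G s - (s - t₁) * uddot s v) s := by
      intro s hs
      rw [uIcc_of_le ht1] at hs
      have hs' : s ∈ Set.Icc t₁ t₂ := ⟨hs.1, hs.2.trans ht2⟩
      have h0 := ((hasDerivAt_id s).sub_const t₁).mul (hGder s hs')
      have h' : G s - (s - t₁) * uddot s v = 1 * G s + (id s - t₁) * -(uddot s v) := by
        simp only [id]; ring
      rw [h']
      exact h0
    have hFTC := intervalIntegral.integral_eq_sub_of_hasDerivAt hP
      (ivG1.sub (ivw1.mono_set hsub1))
    rw [intervalIntegral.integral_sub ivG1 (ivw1.mono_set hsub1), hG1] at hFTC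
    simp only [sub_self, zero_mul, sub_zero] at hFTC
    rw [hI₁def, hadef]
    linarith [hFTC]
  have hI₂ : I₂ = F t + b * G t := by
    have hP : ∀ s ∈ Set.uIcc t t₂,
        HasDerivAt (fun y => (t₂ - y) * G y) (-(G s) - (t₂ - s) * uddot s v) s := by
      intro s hs
      rw [uIcc_of_le ht2] at hs
      have hs' : s ∈ Set.Icc t₁ t₂ := ⟨ht1.trans hs.1, hs.2⟩
      have h0 := ((hasDerivAt_id s).const_sub t₂).mul (hGder s hs')
      have h' : -(G s) - (t₂ - s) * uddot s v = -1 * G s + (t₂ - id s) * -(uddot s v) := by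
        simp only [id]; ring
      rw [h']
      exact h0
    have hFTC := intervalIntegral.integral_eq_sub_of_hasDerivAt hP
      ((ivG2.neg).sub (ivw2.mono_set hsub2))
    have e1 : (∫ y in t..t₂, (-G y - (t₂ - y) * uddot y v))
        = (∫ y in t..t₂, (-G y)) - (∫ y in t..t₂, (t₂ - y) * uddot y v) :=
      intervalIntegral.integral_sub ivG2.neg (ivw2.mono_set hsub2)
    have e2 : (∫ y in t..t₂, (-G y)) = -∫ y in t..t₂, G y := intervalIntegral.integral_neg
    rw [hI₂def, hbdef]
    rw [e1, e2, hG2] at hFTC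
    simp only [sub_self, zero_mul, zero_sub, neg_neg] at hFTC
    linarith [hFTC]
  have hFrep : τ * F t = b * I₁ + a * I₂ := by
    rw [hI₁, hI₂, ← habτ]; ring
  clear_value τ d c v a b I₁ I₂
  -- named integrals
  set S : ℝ := ∫ s in t₁..t₂, (‖uddot s‖ ^ 2 + ‖udot s‖ ^ 2) with hSdef
  set B : ℝ := ∫ s in t₁..t₂, ‖udot s‖ ^ 2 with hBdef2
  clear_value S B
  have hS0 : 0 ≤ S := by
    rw [hSdef]; exact intervalIntegral.integral_nonneg hle (fun s _ => hSnn s)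
  have hB0 : 0 ≤ B := by
    rw [hBdef2]; exact intervalIntegral.integral_nonneg hle (fun s _ => sq_nonneg _)
  have hBS : B ≤ S := by
    rw [hSdef, hBdef2]
    refine intervalIntegral.integral_mono_on hle ivB ivS (fun s _ => ?_)
    linarith [sq_nonneg ‖uddot s‖]
  -- defeq copies with edot
  have ivedot' : IntervalIntegrable edot volume t₁ t₂ := ivedot
  have ivedotsq' : IntervalIntegrable (fun s => ‖edot s‖ ^ 2) volume t₁ t₂ := ivedotsq
  -- mean value trick : ∫ ‖edot‖² ≤ B
  set Y : ℝ := ∫ s in t₁..t₂, ‖edot s‖ ^ 2 with hYdef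
  clear_value Y
  have hYB : Y ≤ B := by
    have hexp : (fun s => ‖edot s‖ ^ 2)
        = fun s => ‖c‖ ^ 2 - 2 * ⟪c, udot s⟫ + ‖udot s‖ ^ 2 := by
      funext s
      rw [hedotdef]
      exact norm_sub_sq_real c (udot s)
    have hii : ∫ s in t₁..t₂, ⟪c, udot s⟫ = τ * ‖c‖ ^ 2 := by
      rw [intervalIntegral.integral_of_le hle, integral_inner hudoti c,
        ← intervalIntegral.integral_of_le hle, hFTCu, ← hτc, real_inner_smul_right,
        real_inner_self_eq_norm_sq]
    rw [hYdef, hBdef2, hexp, intervalIntegral.integral_add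
      ((_root_.intervalIntegrable_const).sub (ivinner.const_mul 2)) ivB,
      intervalIntegral.integral_sub _root_.intervalIntegrable_const (ivinner.const_mul 2),
      intervalIntegral.integral_const_mul, hii, intervalIntegral.integral_const]
    simp only [smul_eq_mul, ← hτdef]
    linarith [mul_nonneg hτ.le (sq_nonneg ‖c‖)]
  set Y₁ : ℝ := ∫ s in t₁..t, ‖edot s‖ ^ 2 with hY₁def
  set Y₂ : ℝ := ∫ s in t..t₂, ‖edot s‖ ^ 2 with hY₂def
  clear_value Y₁ Y₂
  have hY₁0 : 0 ≤ Y₁ := by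
    rw [hY₁def]; exact intervalIntegral.integral_nonneg ht1 (fun s _ => sq_nonneg _)
  have hY₂0 : 0 ≤ Y₂ := by
    rw [hY₂def]; exact intervalIntegral.integral_nonneg ht2 (fun s _ => sq_nonneg _)
  have hYsplit : Y₁ + Y₂ = Y := by
    rw [hY₁def, hY₂def, hYdef]
    exact intervalIntegral.integral_add_adjacent_intervals
      (ivedotsq'.mono_set hsub1) (ivedotsq'.mono_set hsub2)
  -- V-norm bounds on v
  have hnorm1 : ‖v‖ ≤ ∫ s in t₁..t, ‖edot s‖ := by
    rw [← hEt1]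
    exact intervalIntegral.norm_integral_le_integral_norm ht1
  have hnorm2 : ‖v‖ ≤ ∫ s in t..t₂, ‖edot s‖ := by
    have h1 : ‖v‖ = ‖∫ s in t..t₂, edot s‖ := by rw [hEt2, norm_neg]
    rw [h1]
    exact intervalIntegral.norm_integral_le_integral_norm ht2
  have hcs1 : (∫ s in t₁..t, ‖edot s‖) ^ 2 ≤ Y₁ * a := by
    have h1 := my_cs_integral ht1 (ivedotsq'.mono_set hsub1)
      (g := fun s => ‖edot s‖) (h := fun _ => (1:ℝ))
      (by simpa using (_root_.intervalIntegrable_const (c := (1:ℝ)) (μ := volume) (a := t₁) (b := t)))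
      (by simpa using ((ivedot'.norm).mono_set hsub1))
    simp only [mul_one, one_pow, intervalIntegral.integral_const, smul_eq_mul] at h1
    rw [hY₁def, hadef]
    simpa using h1
  have hcs2 : (∫ s in t..t₂, ‖edot s‖) ^ 2 ≤ Y₂ * b := by
    have h1 := my_cs_integral ht2 (ivedotsq'.mono_set hsub2)
      (g := fun s => ‖edot s‖) (h := fun _ => (1:ℝ))
      (by simpa using (_root_.intervalIntegrable_const (c := (1:ℝ)) (μ := volume) (a := t) (b := t₂)))
      (by simpa using ((ivedot'.norm).mono_set hsub2))
    simp only [mul_one, one_pow, intervalIntegral.integral_const, smul_eq_mul] at h1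
    rw [hY₂def, hbdef]
    simpa using h1
  have hn1 : ‖v‖ ^ 2 ≤ a * Y₁ := by
    linarith [mul_self_le_mul_self (norm_nonneg v) hnorm1, hcs1, sq_nonneg ‖v‖]
  have hn2 : ‖v‖ ^ 2 ≤ b * Y₂ := by
    linarith [mul_self_le_mul_self (norm_nonneg v) hnorm2, hcs2, sq_nonneg ‖v‖]
  have hNv : τ * ‖v‖ ^ 2 ≤ a * b * Y := by
    calc τ * ‖v‖ ^ 2 = b * ‖v‖ ^ 2 + a * ‖v‖ ^ 2 := by rw [← habτ]; ring
    _ ≤ b * (a * Y₁) + a * (b * Y₂) :=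
        add_le_add (mul_le_mul_of_nonneg_left hn1 hb0) (mul_le_mul_of_nonneg_left hn2 ha0)
    _ = a * b * (Y₁ + Y₂) := by ring
    _ = a * b * Y := by rw [hYsplit]
  -- the X integrals
  set X₁ : ℝ := ∫ s in t₁..t, (uddot s v) ^ 2 with hX₁def
  set X₂ : ℝ := ∫ s in t..t₂, (uddot s v) ^ 2 with hX₂def
  set X : ℝ := ∫ s in t₁..t₂, (uddot s v) ^ 2 with hXdef
  clear_value X₁ X₂ X
  have hX₁0 : 0 ≤ X₁ := by
    rw [hX₁def]; exact intervalIntegral.integral_nonneg ht1 (fun s _ => sq_nonneg _)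
  have hX₂0 : 0 ≤ X₂ := by
    rw [hX₂def]; exact intervalIntegral.integral_nonneg ht2 (fun s _ => sq_nonneg _)
  have hXsplit : X₁ + X₂ = X := by
    rw [hX₁def, hX₂def, hXdef]
    exact intervalIntegral.integral_add_adjacent_intervals
      ((ivgvsq v).mono_set hsub1) ((ivgvsq v).mono_set hsub2)
  have hXA : X + ‖v‖ ^ 2 * B ≤ ‖v‖ ^ 2 * S := by
    have h1 : X + ‖v‖ ^ 2 * B
        = ∫ s in t₁..t₂, ((uddot s v) ^ 2 + ‖v‖ ^ 2 * ‖udot s‖ ^ 2) := by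
      rw [hXdef, hBdef2, ← intervalIntegral.integral_const_mul,
        ← intervalIntegral.integral_add (ivgvsq v) (ivB.const_mul _)]
    have h2 : ‖v‖ ^ 2 * S = ∫ s in t₁..t₂, ‖v‖ ^ 2 * (‖uddot s‖ ^ 2 + ‖udot s‖ ^ 2) := by
      rw [hSdef, ← intervalIntegral.integral_const_mul]
    rw [h1, h2]
    refine intervalIntegral.integral_mono_on hle ((ivgvsq v).add (ivB.const_mul _))
      (ivS.const_mul _) (fun s _ => ?_)
    have h3 : |uddot s v| ≤ ‖uddot s‖ * ‖v‖ := by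
      simpa [Real.norm_eq_abs] using (uddot s).le_opNorm v
    have h4 : (uddot s v) ^ 2 ≤ ‖uddot s‖ ^ 2 * ‖v‖ ^ 2 := by
      have h5 := pow_le_pow_left₀ (abs_nonneg (uddot s v)) h3 2
      rwa [sq_abs, mul_pow] at h5
    have h6 : ‖v‖ ^ 2 * (‖uddot s‖ ^ 2 + ‖udot s‖ ^ 2)
        = ‖uddot s‖ ^ 2 * ‖v‖ ^ 2 + ‖v‖ ^ 2 * ‖udot s‖ ^ 2 := by ring
    rw [h6]
    linarith [h4]
  -- Cauchy-Schwarz for the weighted integrals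
  have hw1sq : ∫ s in t₁..t, (s - t₁) ^ 2 = a ^ 3 / 3 := by
    rw [intervalIntegral.integral_comp_sub_right (fun x => x ^ 2) t₁, sub_self, integral_pow,
      hadef]
    norm_num
  have hw2sq : ∫ s in t..t₂, (t₂ - s) ^ 2 = b ^ 3 / 3 := by
    rw [intervalIntegral.integral_comp_sub_left (fun x => x ^ 2) t₂, sub_self, integral_pow,
      hbdef]
    norm_num
  have hI₁cs : I₁ ^ 2 ≤ a ^ 3 / 3 * X₁ := by
    have h1 := my_cs_integral ht1
      (g := fun s => s - t₁) (h := fun s => uddot s v)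
      (((continuous_id.sub continuous_const).pow 2).intervalIntegrable t₁ t)
      ((ivgvsq v).mono_set hsub1) (ivw1.mono_set hsub1)
    rw [hw1sq] at h1
    rw [hI₁def, hX₁def]
    exact h1
  have hI₂cs : I₂ ^ 2 ≤ b ^ 3 / 3 * X₂ := by
    have h1 := my_cs_integral ht2
      (g := fun s => t₂ - s) (h := fun s => uddot s v)
      (((continuous_const.sub continuous_id).pow 2).intervalIntegrable t t₂)
      ((ivgvsq v).mono_set hsub2) (ivw2.mono_set hsub2)
    rw [hw2sq] at h1
    rw [hI₂def, hX₂def]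
    exact h1
  -- put the pieces together
  set L : ℝ := ‖ι v‖ ^ 2 with hLdef
  clear_value L
  have hL0 : 0 ≤ L := by rw [hLdef]; positivity
  have hLF : L = F t := by
    rw [hLdef, hFdef]
    simp only []
    rw [← hvdef, real_inner_self_eq_norm_sq]
  set x₁ : ℝ := Real.sqrt X₁ with hx₁def
  set x₂ : ℝ := Real.sqrt X₂ with hx₂def
  have hx₁sq : x₁ ^ 2 = X₁ := by rw [hx₁def]; exact Real.sq_sqrt hX₁0
  have hx₂sq : x₂ ^ 2 = X₂ := by rw [hx₂def]; exact Real.sq_sqrt hX₂0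
  have hx₁0 : 0 ≤ x₁ := by rw [hx₁def]; exact Real.sqrt_nonneg _
  have hx₂0 : 0 ≤ x₂ := by rw [hx₂def]; exact Real.sqrt_nonneg _
  set p₁ : ℝ := Real.sqrt (a ^ 3 / 3) with hp₁def
  set p₂ : ℝ := Real.sqrt (b ^ 3 / 3) with hp₂def
  clear_value x₁ x₂ p₁ p₂
  have hp₁sq : p₁ ^ 2 = a ^ 3 / 3 := by rw [hp₁def]; exact Real.sq_sqrt (by positivity)
  have hp₂sq : p₂ ^ 2 = b ^ 3 / 3 := by rw [hp₂def]; exact Real.sq_sqrt (by positivity)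
  have hp₁0 : 0 ≤ p₁ := by rw [hp₁def]; exact Real.sqrt_nonneg _
  have hp₂0 : 0 ≤ p₂ := by rw [hp₂def]; exact Real.sqrt_nonneg _
  have hI₁abs : |I₁| ≤ p₁ * x₁ := by
    have h1 : Real.sqrt (I₁ ^ 2) ≤ Real.sqrt (a ^ 3 / 3 * X₁) := Real.sqrt_le_sqrt hI₁cs
    rwa [Real.sqrt_sq_eq_abs, Real.sqrt_mul (by positivity) _, ← hp₁def, ← hx₁def] at h1
  have hI₂abs : |I₂| ≤ p₂ * x₂ := by
    have h1 : Real.sqrt (I₂ ^ 2) ≤ Real.sqrt (b ^ 3 / 3 * X₂) := Real.sqrt_le_sqrt hI₂cs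
    rwa [Real.sqrt_sq_eq_abs, Real.sqrt_mul (by positivity) _, ← hp₂def, ← hx₂def] at h1
  have hLle : τ * L ≤ b * (p₁ * x₁) + a * (p₂ * x₂) := by
    calc τ * L = b * I₁ + a * I₂ := by rw [hLF, hFrep]
    _ ≤ b * |I₁| + a * |I₂| :=
        add_le_add (mul_le_mul_of_nonneg_left (le_abs_self _) hb0)
          (mul_le_mul_of_nonneg_left (le_abs_self _) ha0)
    _ ≤ b * (p₁ * x₁) + a * (p₂ * x₂) :=
        add_le_add (mul_le_mul_of_nonneg_left hI₁abs hb0)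
          (mul_le_mul_of_nonneg_left hI₂abs ha0)
  have hcoef : (b * p₁) ^ 2 + (a * p₂) ^ 2 = a ^ 2 * b ^ 2 / 3 * τ := by
    rw [mul_pow, mul_pow, hp₁sq, hp₂sq, ← habτ]; ring
  have hR2 : (b * (p₁ * x₁) + a * (p₂ * x₂)) ^ 2 ≤ (a ^ 2 * b ^ 2 / 3 * τ) * X := by
    have key : (b * (p₁ * x₁) + a * (p₂ * x₂)) ^ 2
        ≤ ((b * p₁) ^ 2 + (a * p₂) ^ 2) * (x₁ ^ 2 + x₂ ^ 2) := by
      have := my_cs_two (b * p₁) (a * p₂) x₁ x₂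
      calc (b * (p₁ * x₁) + a * (p₂ * x₂)) ^ 2 = (b * p₁ * x₁ + a * p₂ * x₂) ^ 2 := by ring
      _ ≤ ((b * p₁) ^ 2 + (a * p₂) ^ 2) * (x₁ ^ 2 + x₂ ^ 2) := this
    calc (b * (p₁ * x₁) + a * (p₂ * x₂)) ^ 2
        ≤ ((b * p₁) ^ 2 + (a * p₂) ^ 2) * (x₁ ^ 2 + x₂ ^ 2) := key
    _ = (a ^ 2 * b ^ 2 / 3 * τ) * X := by rw [hcoef, hx₁sq, hx₂sq, hXsplit]
  have hτL2 : (τ * L) ^ 2 ≤ (a ^ 2 * b ^ 2 / 3 * τ) * X :=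
    (pow_le_pow_left₀ (mul_nonneg hτ.le hL0) hLle 2).trans hR2
  have hL2 : L ^ 2 ≤ a ^ 2 * b ^ 2 / (3 * τ) * X := by
    have h1 : L ^ 2 = (τ * L) ^ 2 / τ ^ 2 := by field_simp
    rw [h1]
    rw [div_le_iff₀ (by positivity : (0:ℝ) < τ ^ 2)]
    calc (τ * L) ^ 2 ≤ (a ^ 2 * b ^ 2 / 3 * τ) * X := hτL2
    _ = a ^ 2 * b ^ 2 / (3 * τ) * X * τ ^ 2 := by field_simp
  -- final combination
  have hSB0 : 0 ≤ S - B := by linarith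
  have hXle : X ≤ ‖v‖ ^ 2 * (S - B) := by linarith [hXA]
  have hv2 : ‖v‖ ^ 2 ≤ a * b / τ * B := by
    have h2 : τ * ‖v‖ ^ 2 ≤ a * b * B :=
      hNv.trans (mul_le_mul_of_nonneg_left hYB (mul_nonneg ha0 hb0))
    rw [div_mul_eq_mul_div, le_div_iff₀ hτ]
    linarith [h2]
  have hL2c : L ^ 2 ≤ a ^ 2 * b ^ 2 / (3 * τ) * ((a * b / τ * B) * (S - B)) := by
    refine hL2.trans ?_
    refine mul_le_mul_of_nonneg_left (hXle.trans ?_) (by positivity)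
    exact mul_le_mul_of_nonneg_right hv2 hSB0
  have hab4 : a * b ≤ τ ^ 2 / 4 := by rw [← habτ]; exact my_amgm a b
  have hKey : L ^ 2 ≤ τ ^ 4 * S ^ 2 / 768 := by
    have h1 : a ^ 2 * b ^ 2 / (3 * τ) * ((a * b / τ * B) * (S - B))
        = (a * b) ^ 3 * (B * (S - B)) / (3 * τ ^ 2) := by
      field_simp
    have h2 : (a * b) ^ 3 ≤ (τ ^ 2 / 4) ^ 3 := pow_le_pow_left₀ (mul_nonneg ha0 hb0) hab4 3
    have h3 : B * (S - B) ≤ S ^ 2 / 4 := by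
      calc B * (S - B) ≤ (B + (S - B)) ^ 2 / 4 := my_amgm _ _
      _ = S ^ 2 / 4 := by ring
    have h4 : 0 ≤ B * (S - B) := mul_nonneg hB0 hSB0
    have h5 : (a * b) ^ 3 * (B * (S - B)) ≤ (τ ^ 2 / 4) ^ 3 * (S ^ 2 / 4) :=
      mul_le_mul h2 h3 h4 (by positivity)
    calc L ^ 2 ≤ (a * b) ^ 3 * (B * (S - B)) / (3 * τ ^ 2) := by rw [← h1]; exact hL2c
    _ ≤ ((τ ^ 2 / 4) ^ 3 * (S ^ 2 / 4)) / (3 * τ ^ 2) := by gcongr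
    _ = τ ^ 4 * S ^ 2 / 768 * (τ ^ 2 / τ ^ 2) := by ring
    _ = τ ^ 4 * S ^ 2 / 768 := by rw [div_self (by positivity : (τ:ℝ) ^ 2 ≠ 0), mul_one]
  have hgoal : L ≤ τ ^ 2 / Real.sqrt 768 * S := by
    have h768 : (0:ℝ) < Real.sqrt 768 := Real.sqrt_pos.mpr (by norm_num)
    rw [div_mul_eq_mul_div, le_div_iff₀ h768]
    have hLsq : (L * Real.sqrt 768) ^ 2 ≤ (τ ^ 2 * S) ^ 2 := by
      rw [mul_pow, Real.sq_sqrt (by norm_num : (0:ℝ) ≤ 768)]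
      linarith [hKey]
    exact my_le_of_sq_le_sq _ _ hLsq (mul_nonneg hL0 (Real.sqrt_nonneg 768))
      (mul_nonneg (sq_nonneg τ) hS0)
  -- conclude
  rw [← map_sub, hadef]
  show ‖ι (e t)‖ ^ 2 ≤ τ ^ 2 / Real.sqrt 768 * S
  rw [← hvdef, ← hLdef]
  exact hgoal
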